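/- Let n, k, l be positive integers and let A ∈ ℝ^{n×n}, C ∈ ℝ^{l×n}, E ∈ ℝ^{n×k}. Let γ > 0 and let P ∈ ℝ^{n×n} be symmetric positive definite satisfying P A + Aᵀ P + γ⁻² P E Eᵀ P + Cᵀ C = 0. Let v : [0,∞) → ℝ^k be continuous and let x : [0,∞) → ℝ^n be continuously differentiable with x(0) = 0 and x'(t) = A x(t) + E v(t). Then for every T ≥ 0, ∫₀ᵀ (|C x(t)|² − γ² |v(t)|²) dt ≤ 0, where |·| denotes the Euclidean norm. -/

import Mathlib

open Matrix Set

lemma aux_contmv {m p : ℕ} (M : Matrix (Fin p) (Fin m) ℝ) : Continuous M.mulVec := by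
  apply continuous_pi; intro i
  simp only [Matrix.mulVec, dotProduct]
  exact continuous_finset_sum _ fun j _ => continuous_const.mul (continuous_apply j)

lemma aux_dpmv {p q : ℕ} (M : Matrix (Fin p) (Fin q) ℝ) (a : Fin q → ℝ) (b : Fin p → ℝ) :
    (M *ᵥ a) ⬝ᵥ b = a ⬝ᵥ (Mᵀ *ᵥ b) := by
  simp only [dotProduct, mulVec, transpose_apply, Finset.sum_mul, Finset.mul_sum]
  rw [Finset.sum_comm]
  exact Finset.sum_congr rfl fun j _ => Finset.sum_congr rfl fun i _ => by ring

lemma aux_dotcont {m : ℕ} {f h : ℝ → Fin m → ℝ} {s : Set ℝ}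
    (hf : ContinuousOn f s) (hh : ContinuousOn h s) :
    ContinuousOn (fun t => f t ⬝ᵥ h t) s := by
  simp only [dotProduct]
  exact continuousOn_finset_sum _ fun i _ =>
    (((continuous_apply i).comp_continuousOn hf).mul ((continuous_apply i).comp_continuousOn hh))

lemma aux_key {n k l : ℕ}
    (A : Matrix (Fin n) (Fin n) ℝ) (C : Matrix (Fin l) (Fin n) ℝ)
    (E : Matrix (Fin n) (Fin k) ℝ) (γ : ℝ) (hγ : 0 < γ)
    (P : Matrix (Fin n) (Fin n) ℝ) (hPsymm : P.IsSymm)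
    (hARE : P * A + Aᵀ * P + (γ ^ 2)⁻¹ • (P * (E * Eᵀ) * P) + Cᵀ * C = 0)
    (X : Fin n → ℝ) (w : Fin k → ℝ) :
    (∑ i, (C.mulVec X i) ^ 2) - γ ^ 2 * ∑ j, (w j) ^ 2 ≤
      -((A.mulVec X + E.mulVec w) ⬝ᵥ P.mulVec X + X ⬝ᵥ P.mulVec (A.mulVec X + E.mulVec w)) := by
  set u : Fin k → ℝ := Eᵀ *ᵥ (P *ᵥ X) with hu
  have hPT : Pᵀ = P := hPsymm
  -- generic: X ⬝ᵥ (P *ᵥ z) = z ⬝ᵥ u-like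
  have hsymmdp : ∀ z : Fin n → ℝ, X ⬝ᵥ (P *ᵥ z) = (P *ᵥ X) ⬝ᵥ z := by
    intro z
    rw [dotProduct_comm, aux_dpmv, hPT, dotProduct_comm]
  have h0 : X ⬝ᵥ ((P * A + Aᵀ * P + (γ ^ 2)⁻¹ • (P * (E * Eᵀ) * P) + Cᵀ * C) *ᵥ X) = 0 := by
    rw [hARE]; simp
  have hexp : X ⬝ᵥ ((P * A) *ᵥ X) + X ⬝ᵥ ((Aᵀ * P) *ᵥ X)
      + (γ ^ 2)⁻¹ * (u ⬝ᵥ u) + (C *ᵥ X) ⬝ᵥ (C *ᵥ X) = 0 := by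
    have e1 : X ⬝ᵥ ((Cᵀ * C) *ᵥ X) = (C *ᵥ X) ⬝ᵥ (C *ᵥ X) := by
      rw [← mulVec_mulVec, dotProduct_comm, aux_dpmv, transpose_transpose]
    have e2 : X ⬝ᵥ ((P * (E * Eᵀ) * P) *ᵥ X) = u ⬝ᵥ u := by
      have hassoc : P * (E * Eᵀ) * P = P * (E * (Eᵀ * P)) := by
        simp [Matrix.mul_assoc]
      rw [hassoc, ← mulVec_mulVec, ← mulVec_mulVec, ← mulVec_mulVec, hsymmdp,
        dotProduct_comm, aux_dpmv, hu]
    rw [← e1, ← e2]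
    have := h0
    simp only [add_mulVec, smul_mulVec, dotProduct_add, dotProduct_smul, smul_eq_mul] at this
    linarith
  have hg : (A.mulVec X + E.mulVec w) ⬝ᵥ P.mulVec X + X ⬝ᵥ P.mulVec (A.mulVec X + E.mulVec w)
      = X ⬝ᵥ ((P * A) *ᵥ X) + X ⬝ᵥ ((Aᵀ * P) *ᵥ X) + 2 * (u ⬝ᵥ w) := by
    have e3 : (A *ᵥ X) ⬝ᵥ (P *ᵥ X) = X ⬝ᵥ ((Aᵀ * P) *ᵥ X) := by
      rw [aux_dpmv, mulVec_mulVec]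
    have e4 : (E *ᵥ w) ⬝ᵥ (P *ᵥ X) = u ⬝ᵥ w := by
      rw [aux_dpmv, hu, dotProduct_comm]
    have e5 : X ⬝ᵥ (P *ᵥ (A *ᵥ X)) = X ⬝ᵥ ((P * A) *ᵥ X) := by rw [mulVec_mulVec]
    have e6 : X ⬝ᵥ (P *ᵥ (E *ᵥ w)) = u ⬝ᵥ w := by
      rw [hsymmdp, dotProduct_comm, aux_dpmv, hu, dotProduct_comm]
    simp only [add_dotProduct, dotProduct_add, mulVec_add]
    rw [e3, e4, e5, e6]; ring
  have hsq : (0:ℝ) ≤ ∑ j, (γ⁻¹ * u j - γ * w j) ^ 2 :=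
    Finset.sum_nonneg fun j _ => sq_nonneg _
  have hexp2 : ∑ j, (γ⁻¹ * u j - γ * w j) ^ 2
      = (γ ^ 2)⁻¹ * (u ⬝ᵥ u) - 2 * (u ⬝ᵥ w) + γ ^ 2 * ∑ j, (w j) ^ 2 := by
    have : ∀ j, (γ⁻¹ * u j - γ * w j) ^ 2
        = (γ ^ 2)⁻¹ * (u j * u j) - 2 * (u j * w j) + γ ^ 2 * (w j) ^ 2 := by
      intro j; field_simp; ring
    simp only [this, Finset.sum_add_distrib, Finset.sum_sub_distrib, ← Finset.mul_sum,
      dotProduct]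
  have hC : ∑ i, (C.mulVec X i) ^ 2 = (C *ᵥ X) ⬝ᵥ (C *ᵥ X) := by
    simp [dotProduct, sq]
  rw [hg, hC]
  nlinarith [hsq, hexp2, hexp]

/-- Corollary 1 (Bounded Real Lemma): for the uncontrolled system
ẋ = Ax + Ev with zero initial condition, a positive definite solution of the
Riccati equation PA + AᵀP + γ⁻²PEEᵀP + CᵀC = 0 certifies L² gain ≤ γ. -/
theorem stmt_1 (n k l : ℕ) (hn : 0 < n) (hk : 0 < k) (hl : 0 < l)
    (A : Matrix (Fin n) (Fin n) ℝ) (C : Matrix (Fin l) (Fin n) ℝ)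
    (E : Matrix (Fin n) (Fin k) ℝ)
    (γ : ℝ) (hγ : 0 < γ)
    (P : Matrix (Fin n) (Fin n) ℝ) (hPsymm : P.IsSymm) (hP : P.PosDef)
    (hARE : P * A + Aᵀ * P + (γ ^ 2)⁻¹ • (P * (E * Eᵀ) * P) + Cᵀ * C = 0)
    (v : ℝ → Fin k → ℝ) (hv : ContinuousOn v (Ici 0))
    (x : ℝ → Fin n → ℝ)
    (hx0 : x 0 = 0)
    (hx : ∀ t ∈ Ici (0 : ℝ),
      HasDerivWithinAt x (A.mulVec (x t) + E.mulVec (v t)) (Ici 0) t) :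
    ∀ T ≥ (0 : ℝ),
      ∫ t in (0 : ℝ)..T, ((∑ i, (C.mulVec (x t) i) ^ 2) - γ ^ 2 * ∑ j, (v t j) ^ 2) ≤ 0 := by
  intro T hT
  set V : ℝ → ℝ := fun t => x t ⬝ᵥ P.mulVec (x t) with hV
  set g : ℝ → ℝ := fun t =>
    (A.mulVec (x t) + E.mulVec (v t)) ⬝ᵥ P.mulVec (x t)
      + x t ⬝ᵥ P.mulVec (A.mulVec (x t) + E.mulVec (v t)) with hg
  -- continuity of x on Ici 0
  have hxc : ContinuousOn x (Ici 0) := fun t ht => (hx t ht).continuousWithinAt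
  have hdc : ContinuousOn (fun t => A.mulVec (x t) + E.mulVec (v t)) (Ici 0) :=
    ((aux_contmv A).comp_continuousOn hxc).add ((aux_contmv E).comp_continuousOn hv)
  have hPxc : ContinuousOn (fun t => P.mulVec (x t)) (Ici 0) :=
    (aux_contmv P).comp_continuousOn hxc
  have hgc : ContinuousOn g (Ici 0) := by
    exact (aux_dotcont hdc hPxc).add
      (aux_dotcont hxc ((aux_contmv P).comp_continuousOn hdc))
  -- derivative of V
  have hVd : ∀ t ∈ Ici (0:ℝ), HasDerivWithinAt V (g t) (Ici 0) t := by
    intro t ht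
    have hxi : ∀ i, HasDerivWithinAt (fun s => x s i)
        ((A.mulVec (x t) + E.mulVec (v t)) i) (Ici 0) t :=
      fun i => hasDerivWithinAt_pi.mp (hx t ht) i
    have h1 : HasDerivWithinAt (fun s => ∑ i, ∑ j, x s i * (P i j * x s j))
        (∑ i, ∑ j, ((A.mulVec (x t) + E.mulVec (v t)) i * (P i j * x t j)
          + x t i * (P i j * (A.mulVec (x t) + E.mulVec (v t)) j))) (Ici 0) t := by
      apply HasDerivWithinAt.fun_sum; intro i _
      apply HasDerivWithinAt.fun_sum; intro j _
      exact (hxi i).mul ((hxi j).const_mul (P i j))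
    have hVeq : V = fun s => ∑ i, ∑ j, x s i * (P i j * x s j) := by
      funext s; simp [hV, dotProduct, mulVec, Finset.mul_sum]
    have hgeq : g t = ∑ i, ∑ j, ((A.mulVec (x t) + E.mulVec (v t)) i * (P i j * x t j)
          + x t i * (P i j * (A.mulVec (x t) + E.mulVec (v t)) j)) := by
      simp [hg, dotProduct, mulVec, Finset.mul_sum, Finset.sum_add_distrib]
    rw [hVeq, hgeq]; exact h1
  have hsub : Icc (0:ℝ) T ⊆ Ici 0 := fun s hs => hs.1
  have hVcont : ContinuousOn V (Icc 0 T) :=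
    fun t ht => ((hVd t (hsub ht)).continuousWithinAt).mono hsub
  have hgint : IntervalIntegrable g MeasureTheory.volume 0 T := by
    apply ContinuousOn.intervalIntegrable
    apply hgc.mono
    rw [uIcc_of_le hT]; exact hsub
  have hFTC : ∫ t in (0:ℝ)..T, g t = V T - V 0 := by
    apply intervalIntegral.integral_eq_sub_of_hasDeriv_right_of_le hT hVcont _ hgint
    intro t ht
    exact (hVd t (le_of_lt ht.1)).mono fun s hs => le_of_lt (lt_trans ht.1 hs)
  -- pointwise inequality
  have hpt : ∀ t ∈ Icc (0:ℝ) T,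
      ((∑ i, (C.mulVec (x t) i) ^ 2) - γ ^ 2 * ∑ j, (v t j) ^ 2) ≤ -g t :=
    fun t _ => aux_key A C E γ hγ P hPsymm hARE (x t) (v t)
  have hφc : ContinuousOn
      (fun t => ((∑ i, (C.mulVec (x t) i) ^ 2) - γ ^ 2 * ∑ j, (v t j) ^ 2)) (Ici 0) := by
    have h1 : ContinuousOn (fun t => ∑ i, (C.mulVec (x t) i) ^ 2) (Ici 0) := by
      have := aux_dotcont ((aux_contmv C).comp_continuousOn hxc)
        ((aux_contmv C).comp_continuousOn hxc)
      simpa [dotProduct, sq] using this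
    have h2 : ContinuousOn (fun t => ∑ j, (v t j) ^ 2) (Ici 0) := by
      have := aux_dotcont hv hv
      simpa [dotProduct, sq] using this
    exact h1.sub (continuousOn_const.mul h2)
  have hφint : IntervalIntegrable
      (fun t => ((∑ i, (C.mulVec (x t) i) ^ 2) - γ ^ 2 * ∑ j, (v t j) ^ 2))
      MeasureTheory.volume 0 T := by
    apply ContinuousOn.intervalIntegrable
    apply hφc.mono
    rw [uIcc_of_le hT]; exact hsub
  have hmono : ∫ t in (0:ℝ)..T, ((∑ i, (C.mulVec (x t) i) ^ 2) - γ ^ 2 * ∑ j, (v t j) ^ 2)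
      ≤ ∫ t in (0:ℝ)..T, -g t :=
    intervalIntegral.integral_mono_on hT hφint hgint.neg hpt
  have hVT : 0 ≤ V T := by
    rcases eq_or_ne (x T) 0 with h | h
    · simp [hV, h]
    · exact le_of_lt (by simpa [hV] using hP.re_dotProduct_pos h)
  have hV0 : V 0 = 0 := by simp [hV, hx0]
  calc ∫ t in (0:ℝ)..T, ((∑ i, (C.mulVec (x t) i) ^ 2) - γ ^ 2 * ∑ j, (v t j) ^ 2)
      ≤ ∫ t in (0:ℝ)..T, -g t := hmono
    _ = -(V T - V 0) := by rw [intervalIntegral.integral_neg, hFTC]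
    _ ≤ 0 := by simp [hV0]; linarith
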